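/- Let X be a simplicial set and x an n-simplex of X. If an ordinal i ∈ [n] reduces x but does not properly reduce x, then i−1 properly reduces x (in particular i ≥ 1). -/

import Mathlib

open CategoryTheory Simplicial

namespace AufhebungSSet

/-- An `n`-simplex `x` of a simplicial set `X` is degenerate if it is the image of a
simplex of strictly smaller dimension under the action of an epimorphism of `Δ`. -/
def IsDegen (X : SSet) {n : ℕ} (x : X _⦋n⦌) : Prop :=
  ∃ m : ℕ, m < n ∧ ∃ ε : (⦋n⦌ : SimplexCategory) ⟶ ⦋m⦌,
    Function.Surjective ε.toOrderHom ∧ ∃ y : X _⦋m⦌, x = X.map ε.op y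

/-- The degeneracy `dgn x = n - k`, where `k` is the least dimension from which `x`
is the image of a simplex under the action of an epimorphism; by the Eilenberg–Zilber
lemma this is the dimension of the nondegenerate simplex of which `x` is a degeneracy. -/
noncomputable def dgn (X : SSet) {n : ℕ} (x : X _⦋n⦌) : ℕ :=
  n - sInf {k | ∃ ε : (⦋n⦌ : SimplexCategory) ⟶ ⦋k⦌,
    Function.Surjective ε.toOrderHom ∧ ∃ y : X _⦋k⦌, x = X.map ε.op y}

/-- `i` reduces `x` when `dgn (x δᵢ) = dgn x - 1`. -/
def Reduces (X : SSet) {n : ℕ} (i : Fin (n + 2)) (x : X _⦋n + 1⦌) : Prop :=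
  dgn X (X.map (SimplexCategory.δ i).op x) + 1 = dgn X x

/-- `i` properly reduces `x` when `x = x δᵢ σᵢ`. -/
def ProperlyReduces (X : SSet) {n : ℕ} (i : Fin (n + 1)) (x : X _⦋n + 1⦌) : Prop :=
  x = X.map (SimplexCategory.σ i).op (X.map (SimplexCategory.δ i.castSucc).op x)

/-- A `(K+2)`-sphere: a family `c₀, …, c_{K+2}` of `(K+1)`-simplices satisfying the
cycle equations `cⱼ δᵢ = cᵢ δ_{j-1}` for `i < j` (here reindexed: `c_{j+1} δᵢ = cᵢ δⱼ`
for `i ≤ j`). -/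
def IsSphere (X : SSet) {K : ℕ} (c : Fin (K + 3) → X _⦋K + 1⦌) : Prop :=
  ∀ i j : Fin (K + 2), i ≤ j →
    X.map (SimplexCategory.δ i).op (c j.succ) = X.map (SimplexCategory.δ j).op (c i.castSucc)

/-- `y` fills the sphere `c` when `y δᵢ = cᵢ` for all `i`. -/
def IsFiller (X : SSet) {K : ℕ} (y : X _⦋K + 2⦌) (c : Fin (K + 3) → X _⦋K + 1⦌) : Prop :=
  ∀ i : Fin (K + 3), X.map (SimplexCategory.δ i).op y = c i


lemma retract {m : ℕ} (p : Fin (m + 2)) :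
    ∃ q : Fin (m + 1), ∀ v : Fin (m + 2), v ≠ p →
      Fin.succAbove p (Fin.predAbove q v) = v := by
  rcases eq_or_ne p (Fin.last (m + 1)) with rfl | hp
  · refine ⟨Fin.last m, fun v hv => ?_⟩
    rw [Fin.predAbove_last_of_ne_last hv, Fin.succAbove_last, Fin.castSucc_castPred]
  · obtain ⟨q, rfl⟩ := Fin.exists_castSucc_eq.2 hp
    exact ⟨q, fun v hv => Fin.succAbove_predAbove hv⟩

lemma key (X : SSet) {n k : ℕ} (x : X _⦋n + 1⦌) (i : Fin (n + 2))
    (ε : (⦋n + 1⦌ : SimplexCategory) ⟶ ⦋k⦌) (hs : Function.Surjective ε.toOrderHom)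
    (y : X _⦋k⦌) (hxy : x = X.map ε.op y)
    (hB : ∀ j, ε.toOrderHom j = ε.toOrderHom i → j = i) :
    1 ≤ k ∧ ∃ η : (⦋n⦌ : SimplexCategory) ⟶ ⦋k - 1⦌,
      Function.Surjective η.toOrderHom ∧
      ∃ z : X _⦋k - 1⦌, X.map (SimplexCategory.δ i).op x = X.map η.op z := by
  obtain _ | k' := k
  · have hsub : ∀ a b : Fin (⦋0⦌.len + 1), a = b := by
      intro a b
      have ha := a.isLt
      have hb := b.isLt
      simp only [SimplexCategory.len_mk] at ha hb
      omega
    have h0 : (0 : Fin (n + 2)) = i := hB 0 (hsub _ _)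
    have h1 : (1 : Fin (n + 2)) = i := hB 1 (hsub _ _)
    have : (0 : Fin (n + 2)) = 1 := h0.trans h1.symm
    simp at this
  refine ⟨by omega, ?_⟩
  set p : Fin (k' + 2) := ε.toOrderHom i with hp
  obtain ⟨q, hq⟩ := retract p
  have hfac : (SimplexCategory.δ i ≫ ε ≫ SimplexCategory.σ q) ≫ SimplexCategory.δ p
      = SimplexCategory.δ i ≫ ε := by
    ext j : 3
    change Fin.succAbove p (Fin.predAbove q (ε.toOrderHom (Fin.succAbove i j)))
      = ε.toOrderHom (Fin.succAbove i j)
    exact hq _ (fun h => Fin.succAbove_ne i j (hB _ h))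
  refine ⟨SimplexCategory.δ i ≫ ε ≫ SimplexCategory.σ q, ?_, X.map (SimplexCategory.δ p).op y, ?_⟩
  · intro m
    have hvp : Fin.succAbove p m ≠ p := Fin.succAbove_ne p m
    obtain ⟨j', hj'⟩ := hs (Fin.succAbove p m)
    have hji : j' ≠ i := by
      intro h
      exact hvp (by rw [← hj', h])
    obtain ⟨j, hj⟩ := Fin.exists_succAbove_eq hji
    refine ⟨j, ?_⟩
    have hq' := hq (ε.toOrderHom (Fin.succAbove i j))
      (fun h => Fin.succAbove_ne i j (hB _ h))
    show Fin.predAbove q (ε.toOrderHom (Fin.succAbove i j)) = m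
    refine Fin.succAbove_right_injective (p := p) ?_
    rw [hq', hj, hj']
  · rw [hxy, ← FunctorToTypes.map_comp_apply, ← FunctorToTypes.map_comp_apply,
      ← op_comp, ← op_comp, hfac]


lemma sigma_delta_comp {n k : ℕ} (ε : (⦋n + 1⦌ : SimplexCategory) ⟶ ⦋k⦌) (a : Fin (n + 1))
    (h : ε.toOrderHom a.castSucc = ε.toOrderHom a.succ) :
    SimplexCategory.σ a ≫ SimplexCategory.δ a.castSucc ≫ ε = ε := by
  ext j : 3
  change ε.toOrderHom (Fin.succAbove a.castSucc (Fin.predAbove a j)) = ε.toOrderHom j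
  by_cases hj : j = a.castSucc
  · subst hj
    rw [Fin.predAbove_castSucc_self, Fin.succAbove_castSucc_of_le _ _ le_rfl, h]
  · rw [Fin.succAbove_predAbove hj]

lemma properlyReduces_of_eq (X : SSet) {n k : ℕ} (x : X _⦋n + 1⦌)
    (ε : (⦋n + 1⦌ : SimplexCategory) ⟶ ⦋k⦌) (y : X _⦋k⦌) (hxy : x = X.map ε.op y)
    (a : Fin (n + 1)) (h : ε.toOrderHom a.castSucc = ε.toOrderHom a.succ) :
    ProperlyReduces X a x := by
  unfold ProperlyReduces
  rw [hxy]
  rw [← FunctorToTypes.map_comp_apply, ← FunctorToTypes.map_comp_apply,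
    ← op_comp, ← op_comp, Category.assoc, sigma_delta_comp ε a h]

/-- If `i` reduces `x` but does not properly reduce `x`, then `i ≥ 1` and `i - 1`
properly reduces `x`. -/
theorem properlyReduces_pred (X : SSet) (n : ℕ) (x : X _⦋n + 1⦌) (i : Fin (n + 2))
    (hred : Reduces X i x)
    (hnp : ∀ h : (i : ℕ) < n + 1, ¬ ProperlyReduces X ⟨(i : ℕ), h⟩ x) :
    ∃ _ : 0 < (i : ℕ),
      ProperlyReduces X ⟨(i : ℕ) - 1, by have := i.isLt; omega⟩ x := by
  have hmem : (n + 1) ∈ {k | ∃ ε : (⦋n + 1⦌ : SimplexCategory) ⟶ ⦋k⦌,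
      Function.Surjective ε.toOrderHom ∧ ∃ y : X _⦋k⦌, x = X.map ε.op y} :=
    ⟨𝟙 _, Function.surjective_id, x, by simp⟩
  have hk := Nat.sInf_mem (Set.nonempty_of_mem hmem)
  obtain ⟨ε, hεs, y, hxy⟩ := hk
  have hm := ε.toOrderHom.monotone
  by_cases hA : ∃ j, j ≠ i ∧ ε.toOrderHom j = ε.toOrderHom i
  · obtain ⟨j, hji, hεj⟩ := hA
    rcases lt_or_gt_of_ne hji with hlt | hgt
    · have hi1 : 1 ≤ (i : ℕ) := by
        have := Fin.lt_def.1 hlt; omega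
      refine ⟨by omega, ?_⟩
      apply properlyReduces_of_eq X x ε y hxy
      set a : Fin (n + 1) := ⟨(i : ℕ) - 1, by have := i.isLt; omega⟩ with ha
      have hsucc : a.succ = i := by
        apply Fin.ext
        rw [Fin.val_succ]
        show (i : ℕ) - 1 + 1 = i
        omega
      have h2 : j ≤ a.castSucc := by
        rw [Fin.le_def]
        have := Fin.lt_def.1 hlt
        show (j : ℕ) ≤ (i : ℕ) - 1
        omega
      have h3 : a.castSucc ≤ i := by
        rw [Fin.le_def]
        show (i : ℕ) - 1 ≤ i
        omega
      rw [hsucc]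
      exact le_antisymm (hm h3) (hεj ▸ hm h2)
    · have hi : (i : ℕ) < n + 1 := by
        have := Fin.lt_def.1 hgt
        have := j.isLt
        omega
      exfalso
      apply hnp hi
      apply properlyReduces_of_eq X x ε y hxy
      set a : Fin (n + 1) := ⟨(i : ℕ), hi⟩ with ha
      have hc : a.castSucc = i := Fin.ext rfl
      have h2 : i ≤ a.succ := by
        rw [Fin.le_def, Fin.val_succ]
        show (i : ℕ) ≤ (i : ℕ) + 1
        omega
      have h3 : a.succ ≤ j := by
        rw [Fin.le_def, Fin.val_succ]
        have := Fin.lt_def.1 hgt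
        show (i : ℕ) + 1 ≤ (j : ℕ)
        omega
      rw [hc]
      exact le_antisymm (hm h2) (hεj ▸ hm h3)
  · exfalso
    have hB : ∀ j, ε.toOrderHom j = ε.toOrderHom i → j = i := by
      intro j h
      by_contra hne
      exact hA ⟨j, hne, h⟩
    obtain ⟨hk1, η, hηs, z, hz⟩ := key X x i ε hεs y hxy hB
    have hmem' : sInf {k | ∃ ε : (⦋n + 1⦌ : SimplexCategory) ⟶ ⦋k⦌,
        Function.Surjective ε.toOrderHom ∧ ∃ y : X _⦋k⦌, x = X.map ε.op y} - 1 ∈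
        {k | ∃ ε : (⦋n⦌ : SimplexCategory) ⟶ ⦋k⦌,
        Function.Surjective ε.toOrderHom ∧
        ∃ y : X _⦋k⦌, X.map (SimplexCategory.δ i).op x = X.map ε.op y} := ⟨η, hηs, z, hz⟩
    have hmemn : n ∈ {k | ∃ ε : (⦋n⦌ : SimplexCategory) ⟶ ⦋k⦌,
        Function.Surjective ε.toOrderHom ∧
        ∃ y : X _⦋k⦌, X.map (SimplexCategory.δ i).op x = X.map ε.op y} :=
      ⟨𝟙 _, Function.surjective_id, X.map (SimplexCategory.δ i).op x, by simp⟩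
    have h1 := Nat.sInf_le hmem'
    have h2 := Nat.sInf_le hmemn
    have h3 := Nat.sInf_le hmem
    have hr : (n - sInf {k | ∃ ε : (⦋n⦌ : SimplexCategory) ⟶ ⦋k⦌,
        Function.Surjective ε.toOrderHom ∧
        ∃ y : X _⦋k⦌, X.map (SimplexCategory.δ i).op x = X.map ε.op y}) + 1
        = (n + 1) - sInf {k | ∃ ε : (⦋n + 1⦌ : SimplexCategory) ⟶ ⦋k⦌,
        Function.Surjective ε.toOrderHom ∧ ∃ y : X _⦋k⦌, x = X.map ε.op y} := hred
    omega


end AufhebungSSet
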